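/- The subhistory swap operator ◁ is well-defined on histories: given a history t and a subhistory s' of an ambient history sDAG such that some subhistory of t conforms with s', the conforming subhistory of t is unique and t ◁ s' is a history. Moreover, if t and s' have labels in Y and the leaves of t are labeled by X ⊆ Y, then t ◁ s' is a history with labels in Y and leaves labeled by X; that is, ◁ preserves the leaf labels of its left argument. -/

import Mathlib

universe u v

/-- A node of a history sDAG: either the universal ancestor (UA) node `ρ`,
or a node carrying a label `ℓ : Y` and a subpartition `U : Set (Set Y)`. -/
inductive HNode (Y : Type u) : Type u
  | ua : HNode Y
  | node : Y → Set (Set Y) → HNode Y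

namespace HistorySDAGs

variable {Y : Type u}

/-- `U ∈ Part(Y)`: `U` is a set of pairwise disjoint nonempty (finite) clades with `|U| ≠ 1`. -/
def IsPart (U : Set (Set Y)) : Prop :=
  (∀ C ∈ U, C ≠ ∅) ∧
  (∀ C₁ ∈ U, ∀ C₂ ∈ U, C₁ ≠ C₂ → Disjoint C₁ C₂) ∧
  (∀ C, U ≠ {C}) ∧
  U.Finite ∧ ∀ C ∈ U, C.Finite

open Classical in
/-- The clade union of a node. -/
noncomputable def cladeUnion : HNode Y → Set Y
  | HNode.ua => ∅
  | HNode.node ℓ U => if U = ∅ then {ℓ} else ⋃₀ U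

/-- Reachability via directed edges in `E`. -/
def Reach (E : Set (HNode Y × HNode Y)) (a b : HNode Y) : Prop :=
  Relation.ReflTransGen (fun x y => (x, y) ∈ E) a b

/-- `(V, E)` is a history sDAG on labels `Y`. -/
structure IsHSDAG (V : Set (HNode Y)) (E : Set (HNode Y × HNode Y)) : Prop where
  ua_mem : HNode.ua ∈ V
  valid : ∀ ℓ U, HNode.node ℓ U ∈ V → IsPart U
  edge_mem : ∀ e ∈ E, e.1 ∈ V ∧ e.2 ∈ V
  reach_ua : ∀ v ∈ V, Reach E HNode.ua v
  no_in_ua : ∀ v : HNode Y, (v, HNode.ua) ∉ E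
  edge_clade : ∀ ℓ U v, (HNode.node ℓ U, v) ∈ E → cladeUnion v ∈ U
  clade_cov : ∀ ℓ U, HNode.node ℓ U ∈ V → ∀ C ∈ U,
      ∃ v, (HNode.node ℓ U, v) ∈ E ∧ cladeUnion v = C

/-- Every node-clade pair of `V` has exactly one descendant edge in `E`. -/
def UniqueDesc (V : Set (HNode Y)) (E : Set (HNode Y × HNode Y)) : Prop :=
  ∀ ℓ U, HNode.node ℓ U ∈ V → ∀ C ∈ U,
    ∃! vc, (HNode.node ℓ U, vc) ∈ E ∧ cladeUnion vc = C

/-- `(V, E)` is a history: a history sDAG in which `ρ` has exactly one child and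
each node-clade pair has exactly one descendant edge. -/
def IsHistory (V : Set (HNode Y)) (E : Set (HNode Y × HNode Y)) : Prop :=
  IsHSDAG V E ∧ (∃! v, (HNode.ua, v) ∈ E) ∧ UniqueDesc V E

/-- `(Vs, Es)` is a subhistory of `(V, E)` with root node `vr`. -/
structure IsSubhistoryRooted (V : Set (HNode Y)) (E : Set (HNode Y × HNode Y))
    (Vs : Set (HNode Y)) (Es : Set (HNode Y × HNode Y)) (vr : HNode Y) : Prop where
  subV : Vs ⊆ V
  subE : Es ⊆ E
  ua_not_mem : HNode.ua ∉ Vs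
  edge_mem : ∀ e ∈ Es, e.1 ∈ Vs ∧ e.2 ∈ Vs
  root_mem : vr ∈ Vs
  reach_root : ∀ v ∈ Vs, Reach Es vr v
  unique_desc : ∀ ℓ U, HNode.node ℓ U ∈ Vs → ∀ C ∈ U,
      ∃! vc, (HNode.node ℓ U, vc) ∈ Es ∧ cladeUnion vc = C

/-- `(Vs, Es)` is a subhistory of `(V, E)`. -/
def IsSubhistory (V : Set (HNode Y)) (E : Set (HNode Y × HNode Y))
    (Vs : Set (HNode Y)) (Es : Set (HNode Y × HNode Y)) : Prop :=
  ∃ vr, IsSubhistoryRooted V E Vs Es vr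

/-- `(Vt, Et)` is a history in (a trim of) the history sDAG `(V, E)`. -/
def HistoryIn (V : Set (HNode Y)) (E : Set (HNode Y × HNode Y))
    (Vt : Set (HNode Y)) (Et : Set (HNode Y × HNode Y)) : Prop :=
  Vt ⊆ V ∧ Et ⊆ E ∧ IsHistory Vt Et

/-- The set of labels of leaf nodes in a node set. -/
def leafLabels (Vt : Set (HNode Y)) : Set Y := {ℓ | HNode.node ℓ ∅ ∈ Vt}

/-- A candidate history/graph: a pair of a node set and an edge set. -/
abbrev Hist (Y : Type u) := Set (HNode Y) × Set (HNode Y × HNode Y)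

/-- The node set of the history sDAG constructed from the collection `T`. -/
def unionV (T : Set (Hist Y)) : Set (HNode Y) := ⋃ t ∈ T, t.1

/-- The edge set of the history sDAG constructed from the collection `T`. -/
def unionE (T : Set (Hist Y)) : Set (HNode Y × HNode Y) := ⋃ t ∈ T, t.2

/-- The node set of the complete history sDAG on labels `Y`. -/
def completeV (Y : Type u) : Set (HNode Y) :=
  {v | v = HNode.ua ∨ ∃ ℓ U, v = HNode.node ℓ U ∧ IsPart U}

/-- The edge set of the complete history sDAG on labels `Y`. -/
def completeE (Y : Type u) : Set (HNode Y × HNode Y) :=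
  {e | e.1 ∈ completeV Y ∧ e.2 ∈ completeV Y ∧ e.2 ≠ HNode.ua ∧
    (e.1 = HNode.ua ∨ ∃ ℓ U, e.1 = HNode.node ℓ U ∧ cladeUnion e.2 ∈ U)}

variable {W : Type v}

/-- The weight `g_f` of a subgraph with edge set `Es`: the sum of `f` over all edges. -/
noncomputable def gweight [AddCommMonoid W] (f : HNode Y × HNode Y → W)
    (Es : Set (HNode Y × HNode Y)) : W := ∑ᶠ e ∈ Es, f e

/-- The order is total on the subset `S` of `W`. -/
def TotalOn [PartialOrder W] (S : Set W) : Prop := ∀ a ∈ S, ∀ b ∈ S, a ≤ b ∨ b ≤ a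

/-- The order respects addition on the subset `S` of `W`. -/
def RespectsAdd [AddCommMonoid W] [PartialOrder W] (S : Set W) : Prop :=
  ∀ a ∈ S, ∀ b ∈ S, ∀ c : W, a < b ↔ a + c < b + c

/-- Weights of subhistories of `(V, E)` rooted at `v`. -/
def subWeights [AddCommMonoid W] (f : HNode Y × HNode Y → W)
    (V : Set (HNode Y)) (E : Set (HNode Y × HNode Y)) (v : HNode Y) : Set W :=
  {w | ∃ Vs Es, IsSubhistoryRooted V E Vs Es v ∧ w = gweight f Es}

/-- Weights of augmented subhistories below the node-clade pair `(v, C)`. -/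
def augWeights [AddCommMonoid W] (f : HNode Y × HNode Y → W)
    (V : Set (HNode Y)) (E : Set (HNode Y × HNode Y)) (v : HNode Y) (C : Set Y) : Set W :=
  {w | ∃ vc Vs Es, (v, vc) ∈ E ∧ cladeUnion vc = C ∧ IsSubhistoryRooted V E Vs Es vc ∧
    w = gweight f (insert (v, vc) Es)}

/-- Weights of histories in `(V, E)`. -/
def historyWeights [AddCommMonoid W] (f : HNode Y × HNode Y → W)
    (V : Set (HNode Y)) (E : Set (HNode Y × HNode Y)) : Set W :=
  {w | ∃ Vt Et, HistoryIn V E Vt Et ∧ w = gweight f Et}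

/-- `W` is clade-ordered with respect to `f` and `(V, E)`. -/
def CladeOrdered [AddCommMonoid W] [PartialOrder W] (f : HNode Y × HNode Y → W)
    (V : Set (HNode Y)) (E : Set (HNode Y × HNode Y)) : Prop :=
  (∀ v ∈ V, v ≠ HNode.ua →
      TotalOn (subWeights f V E v) ∧ RespectsAdd (subWeights f V E v)) ∧
  (∀ ℓ U, HNode.node ℓ U ∈ V → ∀ C ∈ U,
      TotalOn (augWeights f V E (HNode.node ℓ U) C) ∧
      RespectsAdd (augWeights f V E (HNode.node ℓ U) C)) ∧
  TotalOn (historyWeights f V E)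

/-- The minimum-weight histories in `(V, E)` with respect to `g_f`. -/
def minHistories [AddCommMonoid W] [PartialOrder W] (f : HNode Y × HNode Y → W)
    (V : Set (HNode Y)) (E : Set (HNode Y × HNode Y)) : Set (Hist Y) :=
  {t | HistoryIn V E t.1 t.2 ∧
    ∀ t' : Hist Y, HistoryIn V E t'.1 t'.2 → gweight f t.2 ≤ gweight f t'.2}

open Classical in
/-- The map `q` collapsing the edge `(vp, vc)`, sending both `vp` and `vc` to `vp'`. -/
noncomputable def collapseMap (vp vc vp' : HNode Y) (v : HNode Y) : HNode Y :=
  if v = vp ∨ v = vc then vp' else v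

/-- The history obtained by collapsing the edge `(vp, vc)` (into `vp'`) in `t`. -/
noncomputable def collapseEdgeHist (vp vc vp' : HNode Y) (t : Hist Y) : Hist Y :=
  (collapseMap vp vc vp' '' t.1,
   (fun e : HNode Y × HNode Y => (collapseMap vp vc vp' e.1, collapseMap vp vc vp' e.2)) ''
     (t.2 \ {(vp, vc)}))

/-- The new parent node `(ℓ_p, (U_p ∪ U_c) \ {CU(v_c)})` formed when collapsing an edge. -/
noncomputable def newParent : HNode Y → HNode Y → HNode Y
  | HNode.node ℓp Up, HNode.node ℓc Uc =>
      HNode.node ℓp ((Up ∪ Uc) \ {cladeUnion (HNode.node ℓc Uc)})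
  | v, _ => v

/-- `t'` results from `t` by collapsing one label-collapsible edge. -/
def LabelCollapseStep (t t' : Hist Y) : Prop :=
  ∃ ℓ Up Uc, (HNode.node ℓ Up, HNode.node ℓ Uc) ∈ t.2 ∧ Uc ≠ ∅ ∧
    t' = collapseEdgeHist (HNode.node ℓ Up) (HNode.node ℓ Uc)
        (newParent (HNode.node ℓ Up) (HNode.node ℓ Uc)) t

/-- `t` is label-collapsed: it has no label-collapsible edge. -/
def LabelCollapsed (t : Hist Y) : Prop :=
  ∀ ℓ Up Uc, (HNode.node ℓ Up, HNode.node ℓ Uc) ∈ t.2 → Uc = ∅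

/-- `(vp, vc)` is a label-collapsible edge of `G`. -/
def LabelCollapsibleEdge (G : Hist Y) (vp vc : HNode Y) : Prop :=
  (vp, vc) ∈ G.2 ∧ ∃ ℓ Up Uc, vp = HNode.node ℓ Up ∧ vc = HNode.node ℓ Uc ∧ Uc ≠ ∅

/-- `T` is a label-collapsible edge cover of `G`. -/
def LabelCollapsibleEdgeCover (G : Hist Y) (T : Set (Hist Y)) : Prop :=
  (∀ t ∈ T, HistoryIn G.1 G.2 t.1 t.2) ∧
  (∀ e ∈ G.2, ∃ t ∈ T, e ∈ t.2) ∧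
  (∀ vp vc, LabelCollapsibleEdge G vp vc →
    ∀ Vs Es, IsSubhistory G.1 G.2 Vs Es → (vp, vc) ∈ Es →
      ∃ t ∈ T, Vs ⊆ t.1 ∧ Es ⊆ t.2)

open Classical in
/-- Collapsing the edge `(vp, vc)` in the history sDAG `G`, via `E⁺`, `R`, `E⁻`, `E'`, `V'`. -/
noncomputable def collapseDAGEdge (vp vc : HNode Y) (G : Hist Y) : Hist Y :=
  let vp' := newParent vp vc
  let Eplus : Set (HNode Y × HNode Y) :=
    (G.2 ∪ {e | ∃ v, e = (v, vp') ∧ (v, vp) ∈ G.2}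
        ∪ {e | ∃ v, e = (vp', v) ∧ (vp, v) ∈ G.2 ∧ cladeUnion v ≠ cladeUnion vc}
        ∪ {e | ∃ v, e = (vp', v) ∧ (vc, v) ∈ G.2}) \ {(vp, vc)}
  let R : Set (HNode Y × HNode Y) :=
    if ∃ v, (vp, v) ∈ Eplus ∧ cladeUnion v = cladeUnion vc then ∅
    else {e ∈ Eplus | e.2 = vp}
  let Eminus := Eplus \ R
  let E' := {e ∈ Eminus | Reach Eminus HNode.ua e.1}
  ({v | ∃ e ∈ E', v = e.1 ∨ v = e.2}, E')

/-- `t'` is obtained from `t` by a subhistory swap, replacing a subhistory of `t` by a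
conforming subhistory of some history in `S`. -/
def SwapStepUsing (S : Set (Hist Y)) (t t' : Hist Y) : Prop :=
  ∃ t₂ ∈ S, ∃ Vs' Es' vr' vp,
    IsSubhistoryRooted t₂.1 t₂.2 Vs' Es' vr' ∧ (vp, vr') ∈ t₂.2 ∧
    ∃ Vs Es vr, IsSubhistoryRooted t.1 t.2 Vs Es vr ∧ (vp, vr) ∈ t.2 ∧
      leafLabels Vs = leafLabels Vs' ∧
      t' = ((t.1 \ Vs) ∪ Vs', (t.2 \ (Es ∪ {(vp, vr)})) ∪ (Es' ∪ {(vp, vr')}))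

/-- Leaves of an abstract rooted graph. -/
def IsLeafIn {α : Type v} (nodes : Set α) (edges : Set (α × α)) (x : α) : Prop :=
  x ∈ nodes ∧ ∀ c, (x, c) ∉ edges

/-- Reachability via directed edges in an abstract graph. -/
def GReach {α : Type v} (edges : Set (α × α)) (a b : α) : Prop :=
  Relation.ReflTransGen (fun x y => (x, y) ∈ edges) a b

/-- An (internally) labeled tree: a rooted multifurcating tree with no unifurcations,
with node labels in `Y` that are injective on leaves. -/
structure IsLabeledTree {α : Type v} (nodes : Set α) (edges : Set (α × α))
    (root : α) (lab : α → Y) : Prop where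
  root_mem : root ∈ nodes
  edge_mem : ∀ e ∈ edges, e.1 ∈ nodes ∧ e.2 ∈ nodes
  reach_root : ∀ x ∈ nodes, GReach edges root x
  unique_parent : ∀ x a b, (a, x) ∈ edges → (b, x) ∈ edges → a = b
  no_parent_root : ∀ a, (a, root) ∉ edges
  acyclic : ∀ x, ¬ Relation.TransGen (fun a b => (a, b) ∈ edges) x x
  no_unif : ∀ x ∈ nodes, ¬ (∃! c, (x, c) ∈ edges)
  leaf_inj : ∀ x y, IsLeafIn nodes edges x → IsLeafIn nodes edges y → lab x = lab y → x = y
  finite : nodes.Finite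

/-- The set `C_w` of leaf labels below a node `w` of an abstract labeled tree. -/
def leavesBelow {α : Type v} (nodes : Set α) (edges : Set (α × α)) (lab : α → Y) (w : α) :
    Set Y :=
  {y | ∃ u, IsLeafIn nodes edges u ∧ GReach edges w u ∧ y = lab u}

/-- The history sDAG node `v_w` associated to a node `w` of a labeled tree. -/
def treeNodeOf {α : Type v} (nodes : Set α) (edges : Set (α × α)) (lab : α → Y) (w : α) :
    HNode Y :=
  HNode.node (lab w) {C | ∃ w', (w, w') ∈ edges ∧ C = leavesBelow nodes edges lab w'}

/-- The node set `V_t` of the history associated to a labeled tree. -/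
def treeToHistV {α : Type v} (nodes : Set α) (edges : Set (α × α)) (lab : α → Y) :
    Set (HNode Y) :=
  insert HNode.ua (treeNodeOf nodes edges lab '' nodes)

/-- The edge set `E_t` of the history associated to a labeled tree. -/
def treeToHistE {α : Type v} (nodes : Set α) (edges : Set (α × α)) (root : α) (lab : α → Y) :
    Set (HNode Y × HNode Y) :=
  insert (HNode.ua, treeNodeOf nodes edges lab root)
    {e | ∃ w₁ w₂, (w₁, w₂) ∈ edges ∧
      e = (treeNodeOf nodes edges lab w₁, treeNodeOf nodes edges lab w₂)}



section WellDefAux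

open Relation

lemma cu_node_of_ne (ℓ : Y) {U : Set (Set Y)} (h : U ≠ ∅) :
    cladeUnion (HNode.node ℓ U) = ⋃₀ U := by simp [cladeUnion, h]

@[simp] lemma cu_leaf (ℓ : Y) : cladeUnion (HNode.node ℓ (∅ : Set (Set Y))) = {ℓ} := by
  simp [cladeUnion]

lemma cu_subset_of_mem {ℓ : Y} {U : Set (Set Y)} {C : Set Y} (hC : C ∈ U) :
    C ⊆ cladeUnion (HNode.node ℓ U) := by
  have hU : U ≠ ∅ := by rintro rfl; exact hC
  rw [cu_node_of_ne ℓ hU]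
  exact Set.subset_sUnion_of_mem hC

lemma exists_other {U : Set (Set Y)} {C : Set Y} (hC : C ∈ U) (hne : ∀ C', U ≠ {C'}) :
    ∃ C' ∈ U, C' ≠ C := by
  by_contra h
  push_neg at h
  exact hne C (Set.eq_singleton_iff_unique_mem.mpr ⟨hC, h⟩)

lemma cu_ssubset_of_mem {ℓ : Y} {U : Set (Set Y)} {C : Set Y} (hP : IsPart U) (hC : C ∈ U) :
    C ⊂ cladeUnion (HNode.node ℓ U) := by
  obtain ⟨C', hC', hne⟩ := exists_other hC hP.2.2.1
  refine ⟨cu_subset_of_mem hC, fun hsub => ?_⟩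
  obtain ⟨z, hz⟩ := Set.nonempty_iff_ne_empty.mpr (hP.1 C' hC')
  exact Set.disjoint_left.mp (hP.2.1 C' hC' C hC hne) hz (hsub (cu_subset_of_mem hC' hz))

lemma cu_finite_node {ℓ : Y} {U : Set (Set Y)} (hP : IsPart U) :
    (cladeUnion (HNode.node ℓ U)).Finite := by
  by_cases h : U = ∅
  · subst h; simp
  · rw [cu_node_of_ne ℓ h]
    exact Set.Finite.sUnion hP.2.2.2.1 hP.2.2.2.2

lemma cu_nonempty_node {ℓ : Y} {U : Set (Set Y)} (hP : IsPart U) :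
    (cladeUnion (HNode.node ℓ U)).Nonempty := by
  by_cases h : U = ∅
  · subst h; simp
  · obtain ⟨C, hC⟩ := Set.nonempty_iff_ne_empty.mpr h
    obtain ⟨z, hz⟩ := Set.nonempty_iff_ne_empty.mpr (hP.1 C hC)
    exact ⟨z, cu_subset_of_mem hC hz⟩

lemma cu_finite_of_mem {V : Set (HNode Y)} {E : Set (HNode Y × HNode Y)}
    (hsd : IsHSDAG V E) {v : HNode Y} (hv : v ∈ V) (hne : v ≠ HNode.ua) :
    (cladeUnion v).Finite := by
  cases v with
  | ua => exact absurd rfl hne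
  | node ℓ U => exact cu_finite_node (hsd.valid ℓ U hv)

lemma cu_nonempty_of_mem {V : Set (HNode Y)} {E : Set (HNode Y × HNode Y)}
    (hsd : IsHSDAG V E) {v : HNode Y} (hv : v ∈ V) (hne : v ≠ HNode.ua) :
    (cladeUnion v).Nonempty := by
  cases v with
  | ua => exact absurd rfl hne
  | node ℓ U => exact cu_nonempty_node (hsd.valid ℓ U hv)


lemma edge_cu_subset_of_clade {F : Set (HNode Y × HNode Y)}
    (hF1 : ∀ ℓ U v, (HNode.node ℓ U, v) ∈ F → cladeUnion v ∈ U)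
    {a b : HNode Y} (he : (a, b) ∈ F) (ha : a ≠ HNode.ua) :
    cladeUnion b ⊆ cladeUnion a := by
  cases a with
  | ua => exact absurd rfl ha
  | node ℓ U => exact cu_subset_of_mem (hF1 ℓ U b he)

lemma reach_cu_subset {F : Set (HNode Y × HNode Y)}
    (hF1 : ∀ ℓ U v, (HNode.node ℓ U, v) ∈ F → cladeUnion v ∈ U)
    (hF2 : ∀ v : HNode Y, (v, HNode.ua) ∉ F)
    {a b : HNode Y} (h : Reach F a b) (ha : a ≠ HNode.ua) :
    cladeUnion b ⊆ cladeUnion a := by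
  revert ha
  induction h using Relation.ReflTransGen.head_induction_on with
  | refl => intro _; exact subset_rfl
  | @head x c hstep htail ih =>
    intro ha
    have hc : c ≠ HNode.ua := by rintro rfl; exact hF2 _ hstep
    exact (ih hc).trans (edge_cu_subset_of_clade hF1 hstep ha)

lemma ne_ua_of_reach {F : Set (HNode Y × HNode Y)}
    (hF2 : ∀ v : HNode Y, (v, HNode.ua) ∉ F)
    {a b : HNode Y} (h : Reach F a b) (ha : a ≠ HNode.ua) : b ≠ HNode.ua := by
  rintro rfl
  rcases h.cases_tail with rfl | ⟨z, _, hz⟩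
  · exact ha rfl
  · exact hF2 z hz

lemma edge_ncard_lt {V : Set (HNode Y)} {E : Set (HNode Y × HNode Y)}
    (hsd : IsHSDAG V E) {a b : HNode Y} (he : (a, b) ∈ E)
    (ha : a ≠ HNode.ua) : (cladeUnion b).ncard < (cladeUnion a).ncard := by
  cases a with
  | ua => exact absurd rfl ha
  | node ℓ U =>
    have hP := hsd.valid ℓ U (hsd.edge_mem _ he).1
    exact Set.ncard_lt_ncard (cu_ssubset_of_mem hP (hsd.edge_clade ℓ U b he))
      (cu_finite_node hP)

lemma reach_ncard_lt {V : Set (HNode Y)} {E : Set (HNode Y × HNode Y)}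
    (hsd : IsHSDAG V E) {a b : HNode Y} (h : Reach E a b)
    (ha : a ≠ HNode.ua) (hab : a ≠ b) :
    (cladeUnion b).ncard < (cladeUnion a).ncard := by
  rcases h.cases_head with rfl | ⟨c, hac, hcb⟩
  · exact absurd rfl hab
  · have h1 := edge_ncard_lt hsd hac ha
    have hc : c ≠ HNode.ua := by rintro rfl; exact hsd.no_in_ua a hac
    have hsub := reach_cu_subset hsd.edge_clade hsd.no_in_ua hcb hc
    have h2 := Set.ncard_le_ncard hsub (cu_finite_of_mem hsd (hsd.edge_mem _ hac).2 hc)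
    omega

lemma ua_child_eq {V : Set (HNode Y)} {E : Set (HNode Y × HNode Y)}
    (hh : IsHistory V E) {x y : HNode Y}
    (hx : (HNode.ua, x) ∈ E) (hy : (HNode.ua, y) ∈ E) : x = y := by
  obtain ⟨r, _, hu⟩ := hh.2.1
  rw [hu x hx, hu y hy]

lemma reach_root_of_mem {V : Set (HNode Y)} {E : Set (HNode Y × HNode Y)}
    (hh : IsHistory V E) {r v : HNode Y}
    (hr : (HNode.ua, r) ∈ E) (hv : v ∈ V) (hne : v ≠ HNode.ua) : Reach E r v := by
  rcases (hh.1.reach_ua v hv).cases_head with h | ⟨c, hc, hcv⟩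
  · exact absurd h.symm hne
  · rwa [ua_child_eq hh hr hc]

lemma laminar_aux {V : Set (HNode Y)} {E : Set (HNode Y × HNode Y)} (hh : IsHistory V E) :
    ∀ n : ℕ, ∀ a u w : HNode Y, a ≠ HNode.ua → (cladeUnion a).ncard = n →
      Reach E a u → Reach E a w → (cladeUnion u ∩ cladeUnion w).Nonempty →
      Reach E u w ∨ Reach E w u := by
  intro n
  induction n using Nat.strong_induction_on with
  | _ n ih =>
    intro a u w ha hn hu hw hne
    rcases hu.cases_head with rfl | ⟨u₁, hau, hu₁⟩
    · exact Or.inl hw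
    rcases hw.cases_head with rfl | ⟨w₁, haw, hw₁⟩
    · exact Or.inr hu
    cases a with
    | ua => exact absurd rfl ha
    | node ℓ U =>
      have haV := (hh.1.edge_mem _ hau).1
      have hP := hh.1.valid ℓ U haV
      have hcu := hh.1.edge_clade ℓ U u₁ hau
      have hcw := hh.1.edge_clade ℓ U w₁ haw
      have hu1ne : u₁ ≠ HNode.ua := by rintro rfl; exact hh.1.no_in_ua _ hau
      have hw1ne : w₁ ≠ HNode.ua := by rintro rfl; exact hh.1.no_in_ua _ haw
      by_cases hcc : cladeUnion u₁ = cladeUnion w₁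
      · have heq : u₁ = w₁ := by
          obtain ⟨vc, _, hvc⟩ := hh.2.2 ℓ U haV (cladeUnion u₁) hcu
          rw [hvc u₁ ⟨hau, rfl⟩, hvc w₁ ⟨haw, hcc.symm⟩]
        subst heq
        exact ih _ (hn ▸ edge_ncard_lt hh.1 hau ha) u₁ u w hu1ne rfl hu₁ hw₁ hne
      · exfalso
        have hd := hP.2.1 _ hcu _ hcw hcc
        obtain ⟨z, hz1, hz2⟩ := hne
        exact Set.disjoint_left.mp hd
          (reach_cu_subset hh.1.edge_clade hh.1.no_in_ua hu₁ hu1ne hz1)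
          (reach_cu_subset hh.1.edge_clade hh.1.no_in_ua hw₁ hw1ne hz2)

lemma laminar {V : Set (HNode Y)} {E : Set (HNode Y × HNode Y)} (hh : IsHistory V E)
    {a u w : HNode Y} (ha : a ≠ HNode.ua)
    (hu : Reach E a u) (hw : Reach E a w)
    (hne : (cladeUnion u ∩ cladeUnion w).Nonempty) :
    Reach E u w ∨ Reach E w u :=
  laminar_aux hh _ a u w ha rfl hu hw hne

lemma parent_eq_of_reach {V : Set (HNode Y)} {E : Set (HNode Y × HNode Y)}
    (hh : IsHistory V E) {a b c : HNode Y}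
    (hr : Reach E a b) (ha : a ≠ HNode.ua) (h1 : (a, c) ∈ E) (h2 : (b, c) ∈ E) : a = b := by
  rcases hr.cases_head with rfl | ⟨d, had, hdb⟩
  · rfl
  exfalso
  have hb : b ≠ HNode.ua := ne_ua_of_reach hh.1.no_in_ua hr ha
  have hcne : c ≠ HNode.ua := by rintro rfl; exact hh.1.no_in_ua a h1
  have hdne : d ≠ HNode.ua := by rintro rfl; exact hh.1.no_in_ua a had
  have hcV : c ∈ V := (hh.1.edge_mem _ h1).2
  have hcsubb : cladeUnion c ⊆ cladeUnion b := edge_cu_subset_of_clade hh.1.edge_clade h2 hb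
  have hbsubd : cladeUnion b ⊆ cladeUnion d :=
    reach_cu_subset hh.1.edge_clade hh.1.no_in_ua hdb hdne
  cases a with
  | ua => exact ha rfl
  | node ℓ U =>
    have haV := (hh.1.edge_mem _ h1).1
    have hP := hh.1.valid ℓ U haV
    have hCc := hh.1.edge_clade ℓ U c h1
    have hCd := hh.1.edge_clade ℓ U d had
    have hcd : cladeUnion c = cladeUnion d := by
      by_contra hccd
      obtain ⟨z, hz⟩ := cu_nonempty_of_mem hh.1 hcV hcne
      exact Set.disjoint_left.mp (hP.2.1 _ hCc _ hCd hccd) hz (hbsubd (hcsubb hz))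
    have hceqd : c = d := by
      obtain ⟨vc, _, hvc⟩ := hh.2.2 ℓ U haV (cladeUnion c) hCc
      rw [hvc c ⟨h1, rfl⟩, hvc d ⟨had, hcd.symm⟩]
    subst hceqd
    by_cases hbc : b = c
    · subst hbc; exact lt_irrefl _ (edge_ncard_lt hh.1 h2 hb)
    · have := reach_ncard_lt hh.1 hdb hcne (Ne.symm hbc)
      have := edge_ncard_lt hh.1 h2 hb
      omega

lemma unique_parent {V : Set (HNode Y)} {E : Set (HNode Y × HNode Y)}
    (hh : IsHistory V E) {a b c : HNode Y}
    (h1 : (a, c) ∈ E) (h2 : (b, c) ∈ E) : a = b := by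
  have hcne : c ≠ HNode.ua := by rintro rfl; exact hh.1.no_in_ua a h1
  have haux : ∀ x y : HNode Y, (x, c) ∈ E → (y, c) ∈ E → x = HNode.ua → y ≠ HNode.ua → False := by
    intro x y hx hy hxu hyu
    subst hxu
    have hyV : y ∈ V := (hh.1.edge_mem _ hy).1
    have hry : Reach E c y := reach_root_of_mem hh hx hyV hyu
    by_cases hyc : y = c
    · subst hyc; exact lt_irrefl _ (edge_ncard_lt hh.1 hy hyu)
    · have := reach_ncard_lt hh.1 hry hcne (Ne.symm hyc)
      have := edge_ncard_lt hh.1 hy hyu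
      omega
  by_cases ha : a = HNode.ua <;> by_cases hb : b = HNode.ua
  · rw [ha, hb]
  · exact absurd (haux a b h1 h2 ha hb) not_false
  · exact absurd (haux b a h2 h1 hb ha) not_false
  · obtain ⟨r, hr, _⟩ := hh.2.1
    have hrne : r ≠ HNode.ua := by rintro rfl; exact hh.1.no_in_ua _ hr
    have hra : Reach E r a := reach_root_of_mem hh hr (hh.1.edge_mem _ h1).1 ha
    have hrb : Reach E r b := reach_root_of_mem hh hr (hh.1.edge_mem _ h2).1 hb
    obtain ⟨z, hz⟩ := cu_nonempty_of_mem hh.1 (hh.1.edge_mem _ h1).2 hcne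
    have hint : (cladeUnion a ∩ cladeUnion b).Nonempty :=
      ⟨z, edge_cu_subset_of_clade hh.1.edge_clade h1 ha hz,
        edge_cu_subset_of_clade hh.1.edge_clade h2 hb hz⟩
    rcases laminar hh hrne hra hrb hint with hab | hba
    · exact parent_eq_of_reach hh hab ha h1 h2
    · exact (parent_eq_of_reach hh hba hb h2 h1).symm


lemma sub_edge_of_src {V : Set (HNode Y)} {E : Set (HNode Y × HNode Y)}
    {Vs : Set (HNode Y)} {Es : Set (HNode Y × HNode Y)} {vr : HNode Y}
    (hh : IsHistory V E) (hs : IsSubhistoryRooted V E Vs Es vr) {a b : HNode Y}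
    (haS : a ∈ Vs) (he : (a, b) ∈ E) : (a, b) ∈ Es := by
  have hane : a ≠ HNode.ua := by rintro rfl; exact hs.ua_not_mem haS
  cases a with
  | ua => exact absurd rfl hane
  | node ℓ U =>
    have hC := hh.1.edge_clade ℓ U b he
    obtain ⟨vc, ⟨hvcE, hvcC⟩, _⟩ := hs.unique_desc ℓ U haS (cladeUnion b) hC
    obtain ⟨w, _, hw⟩ := hh.2.2 ℓ U (hs.subV haS) (cladeUnion b) hC
    have hvb : vc = b := by rw [hw vc ⟨hs.subE hvcE, hvcC⟩, hw b ⟨he, rfl⟩]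
    exact hvb ▸ hvcE

lemma sub_nodes_eq {V : Set (HNode Y)} {E : Set (HNode Y × HNode Y)}
    {Vs : Set (HNode Y)} {Es : Set (HNode Y × HNode Y)} {vr : HNode Y}
    (hh : IsHistory V E) (hs : IsSubhistoryRooted V E Vs Es vr) :
    Vs = {v | Reach E vr v} := by
  ext v
  constructor
  · intro hv
    exact Relation.ReflTransGen.mono (fun x y h => hs.subE h) _ _ (hs.reach_root v hv)
  · intro hv
    replace hv : Reach E vr v := hv
    induction hv with
    | refl => exact hs.root_mem
    | tail hab hbc ih => exact (hs.edge_mem _ (sub_edge_of_src hh hs ih hbc)).2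

lemma sub_edges_eq {V : Set (HNode Y)} {E : Set (HNode Y × HNode Y)}
    {Vs : Set (HNode Y)} {Es : Set (HNode Y × HNode Y)} {vr : HNode Y}
    (hh : IsHistory V E) (hs : IsSubhistoryRooted V E Vs Es vr) :
    Es = {e ∈ E | e.1 ∈ Vs} := by
  ext ⟨a, b⟩
  exact ⟨fun h => ⟨hs.subE h, (hs.edge_mem _ h).1⟩,
    fun ⟨h1, h2⟩ => sub_edge_of_src hh hs h2 h1⟩

lemma mem_of_reach_sub {V : Set (HNode Y)} {E : Set (HNode Y × HNode Y)}
    {Vs : Set (HNode Y)} {Es : Set (HNode Y × HNode Y)} {vr : HNode Y}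
    (hs : IsSubhistoryRooted V E Vs Es vr) {vc v : HNode Y}
    (h : Reach Es vc v) (hvc : vc ∈ Vs) : v ∈ Vs := by
  induction h with
  | refl => exact hvc
  | tail hab hbc ih => exact (hs.edge_mem _ hbc).2

lemma sub_restrict {V : Set (HNode Y)} {E : Set (HNode Y × HNode Y)}
    {Vs : Set (HNode Y)} {Es : Set (HNode Y × HNode Y)} {vr : HNode Y}
    (hs : IsSubhistoryRooted V E Vs Es vr) {vc : HNode Y} (hvc : vc ∈ Vs) :
    IsSubhistoryRooted V E {v | Reach Es vc v}
      {e ∈ Es | e.1 ∈ {v | Reach Es vc v}} vc := by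
  constructor
  · intro v hv; exact hs.subV (mem_of_reach_sub hs hv hvc)
  · intro e he; exact hs.subE he.1
  · intro h; exact hs.ua_not_mem (mem_of_reach_sub hs h hvc)
  · rintro ⟨a, b⟩ ⟨heE, heR⟩
    exact ⟨heR, Relation.ReflTransGen.tail heR heE⟩
  · exact Relation.ReflTransGen.refl
  · intro v hv
    have hv' : Reach Es vc v := hv
    induction hv' with
    | refl => exact Relation.ReflTransGen.refl
    | tail hab hbc ih =>
      exact Relation.ReflTransGen.tail (ih hab) ⟨hbc, hab⟩
  · intro ℓ U hvU C hC
    obtain ⟨w, ⟨hwE, hwC⟩, hw⟩ := hs.unique_desc ℓ U (mem_of_reach_sub hs hvU hvc) C hC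
    exact ⟨w, ⟨⟨hwE, hvU⟩, hwC⟩, fun y hy => hw y ⟨hy.1.1, hy.2⟩⟩

lemma sub_leafLabels_aux {V : Set (HNode Y)} {E : Set (HNode Y × HNode Y)}
    (hsd : IsHSDAG V E) :
    ∀ n : ℕ, ∀ Vs Es (vr : HNode Y), IsSubhistoryRooted V E Vs Es vr →
      (cladeUnion vr).ncard = n → leafLabels Vs = cladeUnion vr := by
  intro n
  induction n using Nat.strong_induction_on with
  | _ n ih =>
    intro Vs Es vr hs hn
    have hrV : vr ∈ V := hs.subV hs.root_mem
    have hrne : vr ≠ HNode.ua := by rintro rfl; exact hs.ua_not_mem hs.root_mem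
    cases vr with
    | ua => exact absurd rfl hrne
    | node ℓ U =>
      have hP := hsd.valid ℓ U hrV
      by_cases hU : U = ∅
      · subst hU
        have hVs : ∀ v ∈ Vs, v = HNode.node ℓ ∅ := by
          intro v hv
          rcases (hs.reach_root v hv).cases_head with h | ⟨c, hc, _⟩
          · exact h.symm
          · exact absurd (hsd.edge_clade ℓ ∅ c (hs.subE hc)) (by simp)
        ext y
        simp only [leafLabels, Set.mem_setOf_eq, cu_leaf, Set.mem_singleton_iff]
        constructor
        · intro h
          exact ((HNode.node.injEq _ _ _ _).mp (hVs _ h)).1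
        · rintro rfl; exact hs.root_mem
      · have key : ∀ C ∈ U, ∃ vc, (HNode.node ℓ U, vc) ∈ Es ∧ cladeUnion vc = C ∧
            leafLabels {v | Reach Es vc v} = C := by
          intro C hC
          obtain ⟨vc, ⟨hvcE, hvcC⟩, _⟩ := hs.unique_desc ℓ U hs.root_mem C hC
          have hvcS : vc ∈ Vs := (hs.edge_mem _ hvcE).2
          have hlt : (cladeUnion vc).ncard < n := by
            rw [hvcC, ← hn]
            exact Set.ncard_lt_ncard (cu_ssubset_of_mem hP hC) (cu_finite_node hP)
          exact ⟨vc, hvcE, hvcC,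
            hvcC ▸ ih _ hlt _ _ _ (sub_restrict hs hvcS) rfl⟩
        ext y
        constructor
        · intro hy
          have hy' : HNode.node y ∅ ∈ Vs := hy
          rcases (hs.reach_root _ hy').cases_head with heq | ⟨c, hcE, hcR⟩
          · exact absurd ((HNode.node.injEq _ _ _ _).mp heq).2 hU
          · have hCc := hsd.edge_clade ℓ U c (hs.subE hcE)
            obtain ⟨vc, hvcE, hvcC, hleaf⟩ := key _ hCc
            have hcv : c = vc := by
              obtain ⟨w, _, hw⟩ := hs.unique_desc ℓ U hs.root_mem _ hCc
              rw [hw c ⟨hcE, rfl⟩, hw vc ⟨hvcE, hvcC⟩]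
            have hmem : y ∈ leafLabels {v | Reach Es vc v} := hcv ▸ hcR
            exact cu_subset_of_mem hCc (hleaf ▸ hmem)
        · intro hy
          rw [cu_node_of_ne ℓ hU] at hy
          obtain ⟨C, hC, hyC⟩ := hy
          obtain ⟨vc, hvcE, hvcC, hleaf⟩ := key C hC
          have hmem : y ∈ leafLabels {v | Reach Es vc v} := hleaf.symm ▸ hyC
          have hreach : Reach Es vc (HNode.node y ∅) := hmem
          exact mem_of_reach_sub hs hreach (hs.edge_mem _ hvcE).2

lemma leafLabels_eq_cu {V : Set (HNode Y)} {E : Set (HNode Y × HNode Y)}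
    (hsd : IsHSDAG V E)
    {Vs : Set (HNode Y)} {Es : Set (HNode Y × HNode Y)} {vr : HNode Y}
    (hs : IsSubhistoryRooted V E Vs Es vr) : leafLabels Vs = cladeUnion vr :=
  sub_leafLabels_aux hsd _ Vs Es vr hs rfl

end WellDefAux

/-- Lemma `tlwelldefined`: the subhistory swap operator is well-defined:
the conforming subhistory of `t` is unique, the swap is a history, and the swap preserves
the leaf labels of its left argument. -/
theorem swap_well_defined
    (V : Set (HNode Y)) (E : Set (HNode Y × HNode Y)) (hD : IsHSDAG V E)
    (Vs' Es' : _) (vr' : HNode Y) (hs' : IsSubhistoryRooted V E Vs' Es' vr')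
    (vp : HNode Y) (hp' : (vp, vr') ∈ E)
    (Vt : Set (HNode Y)) (Et : Set (HNode Y × HNode Y)) (ht : IsHistory Vt Et)
    (Vs Es : _) (vr : HNode Y) (hs : IsSubhistoryRooted Vt Et Vs Es vr)
    (hp : (vp, vr) ∈ Et)
    (hconf : leafLabels Vs = leafLabels Vs') :
    (∀ Vs₂ Es₂ (vr₂ : HNode Y), IsSubhistoryRooted Vt Et Vs₂ Es₂ vr₂ → (vp, vr₂) ∈ Et →
        leafLabels Vs₂ = leafLabels Vs' → Vs₂ = Vs ∧ Es₂ = Es ∧ vr₂ = vr) ∧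
    IsHistory ((Vt \ Vs) ∪ Vs') ((Et \ (Es ∪ {(vp, vr)})) ∪ (Es' ∪ {(vp, vr')})) ∧
    leafLabels ((Vt \ Vs) ∪ Vs') = leafLabels Vt := by
  have hsd := ht.1
  have hud := ht.2.2
  have hcuS : leafLabels Vs = cladeUnion vr := leafLabels_eq_cu hsd hs
  have hcuS' : leafLabels Vs' = cladeUnion vr' := leafLabels_eq_cu hD hs'
  have hcc : cladeUnion vr' = cladeUnion vr := by rw [← hcuS', ← hconf, hcuS]
  have hVsEq : Vs = {v | Reach Et vr v} := sub_nodes_eq ht hs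
  have hrS : vr ∈ Vs := hs.root_mem
  have hrne : vr ≠ HNode.ua := by rintro rfl; exact hs.ua_not_mem hrS
  have hr'ne : vr' ≠ HNode.ua := by rintro rfl; exact hs'.ua_not_mem hs'.root_mem
  have hrT : vr ∈ Vt := hs.subV hrS
  have hr'V : vr' ∈ V := hs'.subV hs'.root_mem
  have hvpT : vp ∈ Vt := (hsd.edge_mem _ hp).1
  have hvrfin : (cladeUnion vr).Finite := cu_finite_of_mem hsd hrT hrne
  have hvpNS : vp ∉ Vs := by
    intro hvp
    have hvpne : vp ≠ HNode.ua := by rintro rfl; exact hs.ua_not_mem hvp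
    have hreach : Reach Et vr vp := by rw [hVsEq] at hvp; exact hvp
    by_cases h : vr = vp
    · exact lt_irrefl _ (h ▸ edge_ncard_lt hsd hp hvpne)
    · have h1 := reach_ncard_lt hsd hreach hrne h
      have h2 := edge_ncard_lt hsd hp hvpne
      omega
  have hnotin : ∀ a b : HNode Y, (a, b) ∈ Et → a ∉ Vs → (a, b) ∉ Es :=
    fun a b _ ha hin => ha (hs.edge_mem _ hin).1
  have hsrc2 : ∀ a b : HNode Y, (a, b) ∈ Et → (a, b) ∉ Es → a ∉ Vs :=
    fun a b he hn ha => hn (sub_edge_of_src ht hs ha he)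
  have htgt : ∀ a b : HNode Y, (a, b) ∈ Et → (a, b) ∉ Es → (a, b) ≠ (vp, vr) → b ∉ Vs := by
    intro a b he hn hne hb
    by_cases hbr : b = vr
    · subst hbr
      exact hne (by rw [unique_parent ht he hp])
    · have hreach : Reach Et vr b := by rw [hVsEq] at hb; exact hb
      rcases hreach.cases_tail with h | ⟨z, hz1, hz2⟩
      · exact hbr h
      · have hzS : z ∈ Vs := by rw [hVsEq]; exact hz1
        have haz : a = z := unique_parent ht he hz2
        exact hn (sub_edge_of_src ht hs (haz ▸ hzS) he)
  have part1 : ∀ Vs₂ Es₂ (vr₂ : HNode Y), IsSubhistoryRooted Vt Et Vs₂ Es₂ vr₂ →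
      (vp, vr₂) ∈ Et → leafLabels Vs₂ = leafLabels Vs' →
      Vs₂ = Vs ∧ Es₂ = Es ∧ vr₂ = vr := by
    intro Vs₂ Es₂ vr₂ hs₂ hp₂ hconf₂
    have hcu₂ : cladeUnion vr₂ = cladeUnion vr := by
      rw [← leafLabels_eq_cu hsd hs₂, hconf₂, ← hconf, hcuS]
    have hrr : vr₂ = vr := by
      cases hvp : vp with
      | ua => exact ua_child_eq ht (hvp ▸ hp₂) (hvp ▸ hp)
      | node ℓ U =>
        have hpn : (HNode.node ℓ U, vr) ∈ Et := hvp ▸ hp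
        have hpn₂ : (HNode.node ℓ U, vr₂) ∈ Et := hvp ▸ hp₂
        have hC := hsd.edge_clade ℓ U vr hpn
        obtain ⟨w, _, hw⟩ := hud ℓ U (hvp ▸ hvpT) (cladeUnion vr) hC
        rw [hw vr₂ ⟨hpn₂, hcu₂⟩, hw vr ⟨hpn, rfl⟩]
    subst hrr
    have hV2 : Vs₂ = Vs := by rw [sub_nodes_eq ht hs₂, ← sub_nodes_eq ht hs]
    refine ⟨hV2, ?_, rfl⟩
    rw [sub_edges_eq ht hs₂, hV2, ← sub_edges_eq ht hs]
  set Vn := (Vt \ Vs) ∪ Vs' with hVn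
  set En := (Et \ (Es ∪ {(vp, vr)})) ∪ (Es' ∪ {(vp, vr')}) with hEn
  have hmemE : ∀ a b : HNode Y, ((a, b) ∈ En ↔
      ((a, b) ∈ Et ∧ (a, b) ∉ Es ∧ (a, b) ≠ (vp, vr)) ∨
        ((a, b) ∈ Es' ∨ (a, b) = (vp, vr'))) := by
    intro a b
    simp only [hEn, Set.mem_union, Set.mem_diff, Set.mem_singleton_iff, not_or]
  have hmemV : ∀ v : HNode Y, (v ∈ Vn ↔ (v ∈ Vt ∧ v ∉ Vs) ∨ v ∈ Vs') := by
    intro v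
    simp only [hVn, Set.mem_union, Set.mem_diff]
  have hinV1 : ∀ v : HNode Y, v ∈ Vt → v ∉ Vs → v ∈ Vn :=
    fun v h1 h2 => (hmemV v).mpr (Or.inl ⟨h1, h2⟩)
  have hinV2 : ∀ v : HNode Y, v ∈ Vs' → v ∈ Vn :=
    fun v h => (hmemV v).mpr (Or.inr h)
  have hinT : ∀ a b : HNode Y, (a, b) ∈ Et → (a, b) ∉ Es → (a, b) ≠ (vp, vr) →
      (a, b) ∈ En := fun a b h1 h2 h3 => (hmemE a b).mpr (Or.inl ⟨h1, h2, h3⟩)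
  have hinS : ∀ a b : HNode Y, (a, b) ∈ Es' → (a, b) ∈ En :=
    fun a b h => (hmemE a b).mpr (Or.inr (Or.inl h))
  have hinP : (vp, vr') ∈ En := (hmemE vp vr').mpr (Or.inr (Or.inr rfl))
  have hEs'clade : ∀ ℓ U (v : HNode Y), (HNode.node ℓ U, v) ∈ Es' → cladeUnion v ∈ U :=
    fun ℓ U v h => hD.edge_clade ℓ U v (hs'.subE h)
  have hEs'noua : ∀ v : HNode Y, (v, HNode.ua) ∉ Es' :=
    fun v h => hD.no_in_ua v (hs'.subE h)
  have hcuVs' : ∀ m ∈ Vs', cladeUnion m ⊆ cladeUnion vr :=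
    fun m hm => hcc ▸ reach_cu_subset hEs'clade hEs'noua (hs'.reach_root m hm) hr'ne
  have hdisjW : ∀ m : HNode Y, m ∈ Vt → m ∉ Vs → m ∈ Vs' → False := by
    intro m hmT hmNS hmS'
    have hmneua : m ≠ HNode.ua := by rintro rfl; exact hs'.ua_not_mem hmS'
    obtain ⟨r, hr, _⟩ := ht.2.1
    have hrne' : r ≠ HNode.ua := by rintro rfl; exact hsd.no_in_ua _ hr
    have hsubm : cladeUnion m ⊆ cladeUnion vr := hcuVs' m hmS'
    obtain ⟨z, hz⟩ := cu_nonempty_of_mem hsd hmT hmneua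
    have hint : (cladeUnion m ∩ cladeUnion vr).Nonempty := ⟨z, hz, hsubm hz⟩
    rcases laminar ht hrne' (reach_root_of_mem ht hr hmT hmneua)
        (reach_root_of_mem ht hr hrT hrne) hint with hmr | hrm
    · by_cases hmvr : m = vr
      · exact hmNS (hmvr ▸ hrS)
      · have h1 := reach_ncard_lt hsd hmr hmneua hmvr
        have h2 := Set.ncard_le_ncard hsubm hvrfin
        omega
    · exact hmNS (by rw [hVsEq]; exact hrm)
  have hreachNew : ∀ v : HNode Y, Reach Et HNode.ua v → v ∉ Vs →
      Reach En HNode.ua v := by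
    intro v hv
    induction hv with
    | refl => intro _; exact Relation.ReflTransGen.refl
    | @tail b c hab hbc ih =>
      intro hcS
      have hbS : b ∉ Vs := fun hb => hcS (hs.edge_mem _ (sub_edge_of_src ht hs hb hbc)).2
      refine Relation.ReflTransGen.tail (ih hbS) (hinT b c hbc (hnotin _ _ hbc hbS) ?_)
      intro h
      have hc : c = vr := congrArg Prod.snd h
      exact hcS (hc.symm ▸ hrS)
  have hnsd : IsHSDAG Vn En := by
    refine ⟨?_, ?_, ?_, ?_, ?_, ?_, ?_⟩
    · exact hinV1 _ hsd.ua_mem hs.ua_not_mem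
    · intro ℓ U hvU
      rcases (hmemV _).mp hvU with ⟨h1, _⟩ | h1
      · exact hsd.valid ℓ U h1
      · exact hD.valid ℓ U (hs'.subV h1)
    · rintro ⟨a, b⟩ he
      rcases (hmemE a b).mp he with ⟨h1, h2, h3⟩ | h1 | h1
      · exact ⟨hinV1 _ (hsd.edge_mem _ h1).1 (hsrc2 _ _ h1 h2),
          hinV1 _ (hsd.edge_mem _ h1).2 (htgt _ _ h1 h2 h3)⟩
      · exact ⟨hinV2 _ (hs'.edge_mem _ h1).1, hinV2 _ (hs'.edge_mem _ h1).2⟩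
      · injection h1 with ha hb
        subst ha; subst hb
        exact ⟨hinV1 _ hvpT hvpNS, hinV2 _ hs'.root_mem⟩
    · intro v hv
      rcases (hmemV v).mp hv with ⟨h1, h2⟩ | h1
      · exact hreachNew v (hsd.reach_ua v h1) h2
      · exact Relation.ReflTransGen.trans
          (Relation.ReflTransGen.tail (hreachNew vp (hsd.reach_ua vp hvpT) hvpNS) hinP)
          (Relation.ReflTransGen.mono (fun x y h => hinS x y h) _ _ (hs'.reach_root v h1))
    · intro v hv
      rcases (hmemE v HNode.ua).mp hv with ⟨h1, _, _⟩ | h1 | h1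
      · exact hsd.no_in_ua v h1
      · exact hEs'noua v h1
      · exact hr'ne (congrArg Prod.snd h1).symm
    · intro ℓ U v he
      rcases (hmemE _ v).mp he with ⟨h1, _, _⟩ | h1 | h1
      · exact hsd.edge_clade ℓ U v h1
      · exact hEs'clade ℓ U v h1
      · injection h1 with ha hb
        subst hb
        rw [hcc]
        exact hsd.edge_clade ℓ U vr (by rw [ha]; exact hp)
    · intro ℓ U hvU C hC
      rcases (hmemV _).mp hvU with ⟨h1, h2⟩ | h1
      · obtain ⟨w, ⟨hwE, hwC⟩, _⟩ := hud ℓ U h1 C hC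
        by_cases hvw : (HNode.node ℓ U, w) = (vp, vr)
        · injection hvw with ha hb
          refine ⟨vr', (hmemE _ vr').mpr (Or.inr (Or.inr (by rw [ha]))), ?_⟩
          rw [hcc, ← hb]
          exact hwC
        · exact ⟨w, hinT _ _ hwE (hnotin _ _ hwE h2) hvw, hwC⟩
      · obtain ⟨w, ⟨hwE, hwC⟩, _⟩ := hs'.unique_desc ℓ U h1 C hC
        exact ⟨w, hinS _ _ hwE, hwC⟩
  have huaN : ∃! v, (HNode.ua, v) ∈ En := by
    obtain ⟨r, hr, hru⟩ := ht.2.1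
    have hES'ua : ∀ y : HNode Y, (HNode.ua, y) ∉ Es' :=
      fun y h => hs'.ua_not_mem (hs'.edge_mem _ h).1
    by_cases hvpu : vp = HNode.ua
    · subst hvpu
      refine ⟨vr', hinP, ?_⟩
      intro y hy
      rcases (hmemE _ y).mp hy with ⟨h1, _, h3⟩ | h1 | h1
      · exact absurd (by rw [hru y h1, ← hru vr hp]) h3
      · exact absurd h1 (hES'ua y)
      · exact congrArg Prod.snd h1
    · refine ⟨r, hinT _ _ hr (fun h => hs.ua_not_mem (hs.edge_mem _ h).1)
        (fun h => hvpu (congrArg Prod.fst h).symm), ?_⟩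
      intro y hy
      rcases (hmemE _ y).mp hy with ⟨h1, _, _⟩ | h1 | h1
      · exact hru y h1
      · exact absurd h1 (hES'ua y)
      · exact absurd (congrArg Prod.fst h1).symm hvpu
  have hundesc : UniqueDesc Vn En := by
    intro ℓ U hvU C hC
    obtain ⟨w, hwE, hwC⟩ := hnsd.clade_cov ℓ U hvU C hC
    have mixTF : ∀ x : HNode Y, (HNode.node ℓ U, x) ∈ Et → (HNode.node ℓ U, x) ∉ Es →
        HNode.node ℓ U ∈ Vs' → False := by
      intro x hxT hxS hnS'
      exact hdisjW _ (hsd.edge_mem _ hxT).1 (hsrc2 _ _ hxT hxS) hnS'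
    have mixSP : ∀ x : HNode Y, (HNode.node ℓ U, x) ∈ Es' →
        cladeUnion x = cladeUnion vr' → False := by
      intro x hxE hxC
      have hnS' : HNode.node ℓ U ∈ Vs' := (hs'.edge_mem _ hxE).1
      have h1 : cladeUnion (HNode.node ℓ U) ⊆ cladeUnion vr' :=
        reach_cu_subset hEs'clade hEs'noua (hs'.reach_root _ hnS') hr'ne
      have h2 := edge_ncard_lt hD (hs'.subE hxE) (fun h => by cases h)
      have h3 := Set.ncard_le_ncard h1 (cu_finite_of_mem hD hr'V hr'ne)
      rw [hxC] at h2
      omega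
    have mixTP : ∀ x : HNode Y, (HNode.node ℓ U, x) ∈ Et → (HNode.node ℓ U, x) ∉ Es →
        (HNode.node ℓ U, x) ≠ (vp, vr) → HNode.node ℓ U = vp →
        cladeUnion x = cladeUnion vr → False := by
      intro x hxT hxS hxP hnvp hxC
      have hpn : (HNode.node ℓ U, vr) ∈ Et := by rw [hnvp]; exact hp
      have hCvr : cladeUnion vr ∈ U := hsd.edge_clade ℓ U vr hpn
      obtain ⟨u, _, hu⟩ := hud ℓ U (hsd.edge_mem _ hpn).1 (cladeUnion vr) hCvr
      have hxvr : x = vr := by rw [hu x ⟨hxT, hxC⟩, hu vr ⟨hpn, rfl⟩]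
      exact hxP (by rw [hxvr, hnvp])
    refine ⟨w, ⟨hwE, hwC⟩, ?_⟩
    have claim : ∀ x y : HNode Y, (HNode.node ℓ U, x) ∈ En → cladeUnion x = C →
        (HNode.node ℓ U, y) ∈ En → cladeUnion y = C → x = y := by
      intro x y hx hcx hy hcy
      rcases (hmemE _ x).mp hx with ⟨hxT, hxS, hxP⟩ | hxE | hxQ <;>
        rcases (hmemE _ y).mp hy with ⟨hyT, hyS, hyP⟩ | hyE | hyQ
      · obtain ⟨u, _, hu⟩ := hud ℓ U (hsd.edge_mem _ hxT).1 C hC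
        rw [hu x ⟨hxT, hcx⟩, hu y ⟨hyT, hcy⟩]
      · exact absurd (mixTF x hxT hxS (hs'.edge_mem _ hyE).1) not_false
      · injection hyQ with ha hb
        exact absurd (mixTP x hxT hxS hxP ha
          (by rw [hcx, ← hcc, ← hb]; exact hcy.symm)) not_false
      · exact absurd (mixTF y hyT hyS (hs'.edge_mem _ hxE).1) not_false
      · obtain ⟨u, _, hu⟩ := hs'.unique_desc ℓ U (hs'.edge_mem _ hxE).1 C hC
        rw [hu x ⟨hxE, hcx⟩, hu y ⟨hyE, hcy⟩]
      · injection hyQ with ha hb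
        exact absurd (mixSP x hxE (by rw [hcx, ← hb]; exact hcy.symm)) not_false
      · injection hxQ with ha hb
        exact absurd (mixTP y hyT hyS hyP ha
          (by rw [hcy, ← hcc, ← hb]; exact hcx.symm)) not_false
      · injection hxQ with ha hb
        exact absurd (mixSP y hyE (by rw [hcy, ← hb]; exact hcx.symm)) not_false
      · injection hxQ with _ hbx
        injection hyQ with _ hby
        rw [hbx, hby]
    exact fun y hy => claim y w hy.1 hy.2 hwE hwC
  have hlabels : leafLabels ((Vt \ Vs) ∪ Vs') = leafLabels Vt := by
    ext y
    constructor
    · intro hy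
      have hy' : HNode.node y ∅ ∈ (Vt \ Vs) ∪ Vs' := hy
      rcases (Set.mem_union _ _ _).mp hy' with h1 | h1
      · exact h1.1
      · have hm : y ∈ leafLabels Vs' := h1
        have hm2 : y ∈ leafLabels Vs := hconf.symm ▸ hm
        exact hs.subV hm2
    · intro hy
      have hy' : HNode.node y ∅ ∈ Vt := hy
      by_cases hyS : HNode.node y ∅ ∈ Vs
      · have h1 : y ∈ leafLabels Vs := hyS
        have h2 : y ∈ leafLabels Vs' := hconf ▸ h1
        exact (Set.mem_union _ _ _).mpr (Or.inr h2)
      · exact (Set.mem_union _ _ _).mpr (Or.inl ⟨hy', hyS⟩)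
  exact ⟨part1, ⟨hnsd, huaN, hundesc⟩, hlabels⟩

end HistorySDAGs
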